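/- Let D, C ∈ ℝ^{d×d} with D symmetric positive semi-definite of rank k ∈ {1,…,d}. The following are equivalent: (i) no non-trivial subspace of ker D is invariant under Cᵀ; (ii) there exist τ ∈ {0,…,d−k} and κ > 0 such that Σ_{j=0}^{τ} Cʲ D (Cᵀ)ʲ ≥ κ·I; (iii) there exists τ ∈ {0,…,d−k} such that the block matrix [D^{1/2}, C D^{1/2}, …, C^τ D^{1/2}] ∈ ℝ^{d×(τ+1)d} has rank d. -/

import Mathlib

open Matrix

open scoped ComplexOrder in
/-- The positive semidefinite square root of a positive semidefinite matrix
(removed from Mathlib; restored here with its December 2024 definition). -/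
noncomputable def Matrix.PosSemidef.sqrt {n 𝕜 : Type*} [Fintype n] [DecidableEq n] [RCLike 𝕜]
    {A : Matrix n n 𝕜} (hA : A.PosSemidef) : Matrix n n 𝕜 :=
  hA.1.eigenvectorUnitary.1 * diagonal ((↑) ∘ (√·) ∘ hA.1.eigenvalues) *
  (star hA.1.eigenvectorUnitary : Matrix n n 𝕜)

private lemma psd_sqrt_mul_self_aux {n : Type*} [Fintype n] [DecidableEq n] {A : Matrix n n ℝ}
    (hA : A.PosSemidef) : hA.sqrt * hA.sqrt = A := by
  have hs := hA.1.spectral_theorem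
  simp only [Unitary.conjStarAlgAut_apply, Unitary.coe_star] at hs
  have hU : star (hA.1.eigenvectorUnitary : Matrix n n ℝ) * hA.1.eigenvectorUnitary = 1 := by
    simpa using Unitary.coe_star_mul_self hA.1.eigenvectorUnitary
  unfold Matrix.PosSemidef.sqrt
  conv_rhs => rw [hs]
  calc _ = (hA.1.eigenvectorUnitary : Matrix n n ℝ) *
        (diagonal ((RCLike.ofReal : ℝ → ℝ) ∘ (√·) ∘ hA.1.eigenvalues) *
          (star (hA.1.eigenvectorUnitary : Matrix n n ℝ) *
            (hA.1.eigenvectorUnitary : Matrix n n ℝ)) *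
          diagonal ((RCLike.ofReal : ℝ → ℝ) ∘ (√·) ∘ hA.1.eigenvalues)) *
        star (hA.1.eigenvectorUnitary : Matrix n n ℝ) := by simp only [mul_assoc]
    _ = _ := by
      rw [hU, mul_one, diagonal_mul_diagonal]
      congr 2
      ext i j
      by_cases h : i = j <;>
        simp [diagonal_apply, h, Real.mul_self_sqrt (hA.eigenvalues_nonneg j)]

private lemma psd_sqrt_herm_aux {n : Type*} [Fintype n] [DecidableEq n] {A : Matrix n n ℝ}
    (hA : A.PosSemidef) : hA.sqrtᴴ = hA.sqrt := by
  unfold Matrix.PosSemidef.sqrt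
  simp [conjTranspose_mul, mul_assoc, Matrix.star_eq_conjTranspose,
    Matrix.conjTranspose_eq_transpose_of_trivial]

private lemma posDef_exists_kappa {n : Type*} [Fintype n] [DecidableEq n] [Nonempty n]
    {M : Matrix n n ℝ} (hM : M.PosDef) :
    ∃ κ > (0:ℝ), (M - κ • (1 : Matrix n n ℝ)).PosSemidef := by
  have hH := hM.isHermitian
  obtain ⟨i0, -, hi0⟩ := Finset.exists_min_image Finset.univ hH.eigenvalues
    ⟨Classical.arbitrary n, Finset.mem_univ _⟩
  refine ⟨hH.eigenvalues i0, hM.eigenvalues_pos i0, ?_⟩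
  set κ := hH.eigenvalues i0 with hκ
  set U := (hH.eigenvectorUnitary : Matrix n n ℝ) with hUdef
  have hU : U * star U = 1 := Matrix.mem_unitaryGroup_iff.mp (hH.eigenvectorUnitary).2
  have key : M - κ • 1 = U * (Matrix.diagonal (fun i => hH.eigenvalues i - κ)) * star U := by
    have h1 : Matrix.diagonal (fun i => hH.eigenvalues i - κ) =
        Matrix.diagonal ((RCLike.ofReal : ℝ → ℝ) ∘ hH.eigenvalues) - κ • 1 := by
      ext i j
      by_cases h : i = j <;> simp [h, Matrix.diagonal_apply, Matrix.one_apply]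
    have hs := hH.spectral_theorem
    simp only [Unitary.conjStarAlgAut_apply, Unitary.coe_star] at hs
    rw [← hUdef] at hs
    rw [h1, Matrix.mul_sub, Matrix.sub_mul, ← hs]
    congr 1
    rw [Matrix.mul_smul, mul_one, Matrix.smul_mul, hU]
  rw [key, Matrix.star_eq_conjTranspose]
  exact (Matrix.PosSemidef.diagonal
    (fun i => sub_nonneg.2 (hi0 i (Finset.mem_univ i)))).mul_mul_conjTranspose_same U

private lemma block_mul_transpose {d m : ℕ} (A : Fin m → Matrix (Fin d) (Fin d) ℝ) :
    (Matrix.of (fun (i : Fin d) (p : Fin m × Fin d) => A p.1 i p.2)) *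
      (Matrix.of (fun (i : Fin d) (p : Fin m × Fin d) => A p.1 i p.2))ᵀ
    = ∑ j : Fin m, A j * (A j)ᵀ := by
  ext i l
  simp [Matrix.mul_apply, Matrix.sum_apply, Fintype.sum_prod_type]

private lemma sum_decomp {d : ℕ} (D C : Matrix (Fin d) (Fin d) ℝ) (hD : D.PosSemidef) (τ : ℕ) :
    (∑ j ∈ Finset.range (τ + 1), C ^ j * D * (Cᵀ) ^ j)
      = ∑ j : Fin (τ+1), (C ^ (j:ℕ) * hD.sqrt) * (C ^ (j:ℕ) * hD.sqrt)ᵀ := by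
  rw [← Fin.sum_univ_eq_sum_range]
  refine Finset.sum_congr rfl fun j _ => ?_
  have hs : hD.sqrt ᵀ = hD.sqrt := by
    rw [← Matrix.conjTranspose_eq_transpose_of_trivial]
    exact psd_sqrt_herm_aux hD
  rw [Matrix.transpose_mul, hs, Matrix.transpose_pow, ← mul_assoc,
    mul_assoc (C ^ (j:ℕ)) hD.sqrt hD.sqrt, psd_sqrt_mul_self_aux hD]

private lemma dot_sum_mulVec {d : ℕ} {ι : Type*} (s : Finset ι)
    (M : ι → Matrix (Fin d) (Fin d) ℝ) (x : Fin d → ℝ) :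
    x ⬝ᵥ (∑ j ∈ s, M j) *ᵥ x = ∑ j ∈ s, x ⬝ᵥ (M j *ᵥ x) := by
  induction s using Finset.cons_induction with
  | empty => simp
  | cons j s hj ih => rw [Finset.sum_cons, Finset.sum_cons, Matrix.add_mulVec, dotProduct_add, ih]

private lemma quad_term {d : ℕ} (D C : Matrix (Fin d) (Fin d) ℝ) (j : ℕ) (x : Fin d → ℝ) :
    x ⬝ᵥ ((C ^ j * D * (Cᵀ) ^ j) *ᵥ x)
      = ((Cᵀ) ^ j *ᵥ x) ⬝ᵥ (D *ᵥ ((Cᵀ) ^ j *ᵥ x)) := by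
  rw [mul_assoc, ← Matrix.mulVec_mulVec, dotProduct_mulVec, ← Matrix.mulVec_transpose,
    Matrix.transpose_pow, ← Matrix.mulVec_mulVec]

/-- Equivalent characterizations of the hypoellipticity condition (A1). -/
theorem stmt2 {d : ℕ} (D C : Matrix (Fin d) (Fin d) ℝ) (hD : D.PosSemidef)
    (k : ℕ) (hk : D.rank = k) (hk1 : 1 ≤ k) (hkd : k ≤ d) :
    List.TFAE
      [ -- (i) no non-trivial subspace of ker D is invariant under Cᵀ
        (∀ S : Submodule ℝ (Fin d → ℝ), S ≤ LinearMap.ker (Matrix.toLin' D) →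
          (∀ x ∈ S, (Matrix.toLin' Cᵀ) x ∈ S) → S = ⊥),
        -- (ii) ∃ τ ∈ {0,…,d-k}, κ > 0 with ∑_{j=0}^{τ} Cʲ D (Cᵀ)ʲ ≥ κ I
        (∃ τ ≤ d - k, ∃ κ > (0:ℝ),
          ((∑ j ∈ Finset.range (τ + 1), C ^ j * D * (Cᵀ) ^ j)
            - κ • (1 : Matrix (Fin d) (Fin d) ℝ)).PosSemidef),
        -- (iii) ∃ τ ∈ {0,…,d-k} with rank [D^{1/2}, C D^{1/2}, …, C^τ D^{1/2}] = d
        (∃ τ ≤ d - k,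
          (Matrix.of (fun (i : Fin d) (p : Fin (τ + 1) × Fin d) =>
            ((C ^ (p.1 : ℕ)) * hD.sqrt) i p.2)).rank = d) ] := by
  have hd : 0 < d := lt_of_lt_of_le hk1 hkd
  have hne : Nonempty (Fin d) := Fin.pos_iff_nonempty.mp hd
  -- the partial sums
  set Mt : ℕ → Matrix (Fin d) (Fin d) ℝ :=
    fun τ => ∑ j ∈ Finset.range (τ + 1), C ^ j * D * (Cᵀ) ^ j with hMt
  -- the block matrices and the key identity
  have hBBt : ∀ τ : ℕ,
      (Matrix.of (fun (i : Fin d) (p : Fin (τ + 1) × Fin d) =>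
        ((C ^ (p.1 : ℕ)) * hD.sqrt) i p.2)) *
      (Matrix.of (fun (i : Fin d) (p : Fin (τ + 1) × Fin d) =>
        ((C ^ (p.1 : ℕ)) * hD.sqrt) i p.2))ᵀ = Mt τ := by
    intro τ
    rw [show Mt τ = ∑ j ∈ Finset.range (τ + 1), C ^ j * D * (Cᵀ) ^ j from rfl,
      sum_decomp D C hD τ]
    exact block_mul_transpose (fun j : Fin (τ + 1) => C ^ (j : ℕ) * hD.sqrt)
  -- the partial sums are positive semidefinite
  have mt_psd : ∀ τ, (Mt τ).PosSemidef := by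
    intro τ
    rw [← hBBt τ, ← Matrix.conjTranspose_eq_transpose_of_trivial]
    exact Matrix.posSemidef_self_mul_conjTranspose _
  -- quadratic form of Mt
  have quad : ∀ τ (x : Fin d → ℝ), x ⬝ᵥ (Mt τ) *ᵥ x
      = ∑ j ∈ Finset.range (τ + 1), ((Cᵀ) ^ j *ᵥ x) ⬝ᵥ (D *ᵥ ((Cᵀ) ^ j *ᵥ x)) := by
    intro τ x
    rw [hMt, dot_sum_mulVec]
    exact Finset.sum_congr rfl fun j _ => quad_term D C j x
  have hDnn : ∀ y : Fin d → ℝ, 0 ≤ y ⬝ᵥ (D *ᵥ y) := by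
    intro y
    simpa using hD.dotProduct_mulVec_nonneg y
  have quad_zero_iff : ∀ τ (x : Fin d → ℝ), x ⬝ᵥ (Mt τ) *ᵥ x = 0 ↔
      ∀ j ∈ Finset.range (τ + 1), D *ᵥ ((Cᵀ) ^ j *ᵥ x) = 0 := by
    intro τ x
    rw [quad, Finset.sum_eq_zero_iff_of_nonneg (fun j _ => hDnn _)]
    refine forall₂_congr fun j hj => ?_
    simpa using hD.dotProduct_mulVec_zero_iff ((Cᵀ) ^ j *ᵥ x)
  -- positive definiteness from a positive quadratic bound and from full rank
  have psd_quad : ∀ τ (x : Fin d → ℝ), 0 ≤ x ⬝ᵥ (Mt τ) *ᵥ x := by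
    intro τ x
    simpa using (mt_psd τ).dotProduct_mulVec_nonneg x
  -- the kernel chain
  set K : ℕ → Submodule ℝ (Fin d → ℝ) :=
    fun τ => ⨅ j ∈ Finset.range (τ + 1), LinearMap.ker (Matrix.toLin' (D * (Cᵀ) ^ j)) with hKdef
  have hKmem : ∀ τ (x : Fin d → ℝ), x ∈ K τ ↔
      ∀ j ∈ Finset.range (τ + 1), (D * (Cᵀ) ^ j) *ᵥ x = 0 := by
    intro τ x
    simp only [hKdef, Submodule.mem_iInf, LinearMap.mem_ker, Matrix.toLin'_apply]
  have hKle : ∀ τ, K τ ≤ LinearMap.ker (Matrix.toLin' D) := by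
    intro τ x hx
    have h0 := (hKmem τ x).1 hx 0 (Finset.mem_range.2 (Nat.succ_pos τ))
    simp only [pow_zero, mul_one] at h0
    simpa [Matrix.toLin'_apply] using h0
  have hKanti : ∀ τ, K (τ + 1) ≤ K τ := by
    intro τ x hx
    rw [hKmem] at hx ⊢
    intro j hj
    exact hx j (Finset.mem_range.2 (by have := Finset.mem_range.1 hj; omega))
  have hK0 : Module.finrank ℝ (K 0) = d - k := by
    have e1 : K 0 = LinearMap.ker (Matrix.toLin' D) := by
      apply le_antisymm (hKle 0)
      intro x hx
      rw [hKmem]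
      intro j hj
      rw [Finset.mem_range, Nat.lt_one_iff] at hj
      subst hj
      simpa [Matrix.toLin'_apply] using hx
    have e2 : Matrix.toLin' D = D.mulVecLin := LinearMap.ext fun x => rfl
    have e3 := LinearMap.finrank_range_add_finrank_ker D.mulVecLin
    rw [Module.finrank_fin_fun] at e3
    have e4 : Module.finrank ℝ (LinearMap.range D.mulVecLin) = k := by
      rw [← hk]; rfl
    rw [e1, e2]
    omega
  -- PosDef from trivial kernel of the chain
  have pd_of_Kbot : ∀ τ, K τ = ⊥ → (Mt τ).PosDef := by
    intro τ hbot
    refine Matrix.PosDef.of_dotProduct_mulVec_pos (mt_psd τ).1 fun x hx => ?_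
    have h0 := psd_quad τ x
    rcases h0.lt_or_eq with h | h
    · simpa using h
    · exfalso
      have hxK : x ∈ K τ := by
        rw [hKmem]
        intro j hj
        rw [← Matrix.mulVec_mulVec]
        exact (quad_zero_iff τ x).1 h.symm j hj
      rw [hbot, Submodule.mem_bot] at hxK
      exact hx hxK
  tfae_have 1 → 2
  | h1 => by
    -- stabilization implies invariance
    have hinv : ∀ τ, K (τ + 1) = K τ → ∀ x ∈ K τ, Matrix.toLin' Cᵀ x ∈ K τ := by
      intro τ heq x hx
      rw [hKmem]
      intro j hj
      rw [Matrix.toLin'_apply, Matrix.mulVec_mulVec, mul_assoc, ← pow_succ]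
      have hx' : x ∈ K (τ + 1) := by rw [heq]; exact hx
      exact (hKmem (τ + 1) x).1 hx' (j + 1)
        (Finset.mem_range.2 (by have := Finset.mem_range.1 hj; omega))
    have hchain : ∀ τ : ℕ, (∃ σ ≤ τ, K σ = ⊥) ∨ Module.finrank ℝ (K τ) + τ ≤ d - k := by
      intro τ
      induction τ with
      | zero => right; simp [hK0]
      | succ τ ih =>
        rcases ih with ⟨σ, hσ, hb⟩ | hr
        · exact Or.inl ⟨σ, hσ.trans (Nat.le_succ τ), hb⟩
        · by_cases he : K (τ + 1) = K τ
          · exact Or.inl ⟨τ, Nat.le_succ τ, h1 (K τ) (hKle τ) (hinv τ he)⟩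
          · right
            have hlt : K (τ + 1) < K τ := lt_of_le_of_ne (hKanti τ) he
            have := Submodule.finrank_lt_finrank_of_lt hlt
            omega
    obtain ⟨τ, hτ, hbot⟩ : ∃ τ ≤ d - k, K τ = ⊥ := by
      rcases hchain (d - k) with ⟨σ, hσ, hb⟩ | hr
      · exact ⟨σ, hσ, hb⟩
      · refine ⟨d - k, le_rfl, ?_⟩
        have : Module.finrank ℝ (K (d - k)) = 0 := by omega
        exact Submodule.finrank_eq_zero.mp this
    obtain ⟨κ, hκ, hpsd⟩ := posDef_exists_kappa (pd_of_Kbot τ hbot)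
    exact ⟨τ, hτ, κ, hκ, hpsd⟩
  tfae_have 2 → 1
  | h2 => by
    obtain ⟨τ, hτ, κ, hκ, hpsd⟩ := h2
    intro S hSD hSinv
    rw [eq_bot_iff]
    intro x hx
    have hmem : ∀ j : ℕ, (Cᵀ) ^ j *ᵥ x ∈ S := by
      intro j
      induction j with
      | zero => simpa using hx
      | succ j ih =>
        have h := hSinv _ ih
        rwa [Matrix.toLin'_apply, Matrix.mulVec_mulVec, ← pow_succ'] at h
    have hquad : x ⬝ᵥ (Mt τ) *ᵥ x = 0 := by
      rw [quad]
      refine Finset.sum_eq_zero fun j _ => ?_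
      have h := hSD (hmem j)
      rw [LinearMap.mem_ker, Matrix.toLin'_apply] at h
      rw [h, dotProduct_zero]
    have h0 := hpsd.dotProduct_mulVec_nonneg x
    rw [star_trivial, Matrix.sub_mulVec, dotProduct_sub] at h0
    have hMtx : x ⬝ᵥ (κ • (1 : Matrix (Fin d) (Fin d) ℝ)) *ᵥ x ≤ 0 := by
      have : x ⬝ᵥ (Mt τ) *ᵥ x - x ⬝ᵥ (κ • (1 : Matrix (Fin d) (Fin d) ℝ)) *ᵥ x ≥ 0 := h0
      rw [hquad] at this
      linarith
    rw [Matrix.smul_mulVec, Matrix.one_mulVec, dotProduct_smul, smul_eq_mul] at hMtx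
    have hxx : x ⬝ᵥ x ≤ 0 := nonpos_of_mul_nonpos_right ?_ hκ
    · rw [Submodule.mem_bot]
      exact dotProduct_self_eq_zero.mp (le_antisymm hxx (Finset.sum_nonneg (fun i _ => mul_self_nonneg (x i))))
    · linarith
  tfae_have 2 → 3
  | h2 => by
    obtain ⟨τ, hτ, κ, hκ, hpsd⟩ := h2
    refine ⟨τ, hτ, ?_⟩
    have hpd : (Mt τ).PosDef := by
      refine Matrix.PosDef.of_dotProduct_mulVec_pos (mt_psd τ).1 fun x hx => ?_
      have h0 := hpsd.dotProduct_mulVec_nonneg x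
      rw [star_trivial, Matrix.sub_mulVec, dotProduct_sub, Matrix.smul_mulVec,
        Matrix.one_mulVec, dotProduct_smul, smul_eq_mul] at h0
      have hxx : 0 < x ⬝ᵥ x :=
        lt_of_le_of_ne (Finset.sum_nonneg (fun i _ => mul_self_nonneg (x i))) fun h =>
          hx (dotProduct_self_eq_zero.mp h.symm)
      have : 0 < κ * (x ⬝ᵥ x) := mul_pos hκ hxx
      simp only [star_trivial]
      linarith
    have hrk : (Mt τ).rank = d := by
      rw [Matrix.rank_of_isUnit _ hpd.isUnit, Fintype.card_fin]
    rw [← hBBt τ, Matrix.rank_self_mul_transpose] at hrk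
    exact hrk
  tfae_have 3 → 2
  | h3 => by
    obtain ⟨τ, hτ, hrank⟩ := h3
    have hrk : (Mt τ).rank = d := by
      rw [← hBBt τ, Matrix.rank_self_mul_transpose, hrank]
    have hker : LinearMap.ker (Mt τ).mulVecLin = ⊥ := by
      have e3 := LinearMap.finrank_range_add_finrank_ker (Mt τ).mulVecLin
      rw [Module.finrank_fin_fun] at e3
      have e4 : Module.finrank ℝ (LinearMap.range (Mt τ).mulVecLin) = d := hrk
      apply Submodule.finrank_eq_zero.mp
      omega
    have hpd : (Mt τ).PosDef := by
      refine Matrix.PosDef.of_dotProduct_mulVec_pos (mt_psd τ).1 fun x hx => ?_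
      have hnz : (Mt τ) *ᵥ x ≠ 0 := by
        intro h
        apply hx
        have : x ∈ LinearMap.ker (Mt τ).mulVecLin := h
        rw [hker, Submodule.mem_bot] at this
        exact this
      have h0 := psd_quad τ x
      rcases h0.lt_or_eq with h | h
      · simpa using h
      · exact absurd (((mt_psd τ).dotProduct_mulVec_zero_iff x).1 (by simpa using h.symm)) hnz
    obtain ⟨κ, hκ, hpsd⟩ := posDef_exists_kappa hpd
    exact ⟨τ, hτ, κ, hκ, hpsd⟩
  tfae_finish
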